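/- arXiv:cs/0411007 — 2 statements merged into one kernel-verified Lean document; each statement's English description precedes it below -/
import Mathlib

section
/- For every one-dimensional sand automaton, surjectivity implies P-surjectivity: if the global function f is surjective on all configurations, then every periodic configuration has a periodic preimage under f. -/
/-- The extended integers `ℤ ∪ {-∞, +∞}`. -/
abbrev EZ : Type := WithBot (WithTop ℤ)

/-- Embedding of `ℤ` into the extended integers. -/
def finVal (n : ℤ) : EZ := ((n : WithTop ℤ) : EZ)

/-- The integer value of a finite extended integer (`0` on `±∞`). -/
def valZ (x : EZ) : ℤ := WithBot.recBotCoe 0 (fun y => WithTop.recTopCoe 0 id y) x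

/-- The measuring device `β_l^m`. -/
noncomputable def beta (l : ℕ) (m : ℤ) (n : EZ) : EZ :=
  if finVal (m + (l : ℤ)) < n then ⊤
  else if n < finVal (m - (l : ℤ)) then ⊥
  else WithBot.map (WithTop.map (fun k => k - m)) n

/-- Reference height: the value of `x` if finite, `0` if `x = ±∞`. -/
def refH (x : EZ) : ℤ := if x = ⊥ ∨ x = ⊤ then 0 else valZ x

/-- One-dimensional sandpile configurations. -/
abbrev Config : Type := ℤ → EZ

/-- The neighborhood sequence `d_r^i(c)`: the `2r`-tuple of measured differences. -/
noncomputable def nbhd (r : ℕ) (c : Config) (i : ℤ) : Fin (2 * r) → EZ :=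
  fun j => beta r (refH (c i))
    (c (i + (if (j : ℕ) < r then ((j : ℕ) : ℤ) - (r : ℤ) else ((j : ℕ) : ℤ) - (r : ℤ) + 1)))

/-- The global function of the sand automaton of radius `r` with local rule `lam`. -/
noncomputable def globalF (r : ℕ) (lam : (Fin (2 * r) → EZ) → ℤ) (c : Config) : Config :=
  fun i => if c i = ⊥ ∨ c i = ⊤ then c i
    else finVal (valZ (c i) + lam (nbhd r c i))

/-- Finite configurations. -/
def FiniteConf (c : Config) : Prop := ∃ k : ℕ, ∀ i : ℤ, (k : ℤ) ≤ |i| → c i = finVal 0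

/-- Periodic configurations. -/
def PeriodicConf (c : Config) : Prop := ∃ p : ℤ, p ≠ 0 ∧ ∀ i : ℤ, c (i + p) = c i

/- ------------------- auxiliary material ------------------- -/

lemma valZ_finVal (n : ℤ) : valZ (finVal n) = n := rfl

lemma finVal_valZ {x : EZ} (h1 : x ≠ ⊥) (h2 : x ≠ ⊤) : finVal (valZ x) = x := by
  induction x using WithBot.recBotCoe with
  | bot => exact absurd rfl h1
  | coe y =>
    induction y using WithTop.recTopCoe with
    | top => exact absurd rfl h2
    | coe n => rfl

/-- Decode an offset (relative to `x`) back to an extended integer. -/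
def decode (x : EZ) (D d : ℤ) : EZ :=
  if d = -D then ⊥ else if d = D then ⊤ else finVal (valZ x + d)

/-- The offset of the preimage `e` relative to the image `c` at position `i`. -/
def offF (r : ℕ) (c e : Config) (i : ℤ) : ℤ :=
  if e i = ⊥ then -((r : ℤ) + 1) else if e i = ⊤ then (r : ℤ) + 1 else valZ (e i) - valZ (c i)

lemma key_lemma (r : ℕ) (lam : (Fin (2 * r) → EZ) → ℤ)
    (hlam : ∀ v, -(r : ℤ) ≤ lam v ∧ lam v ≤ (r : ℤ))
    (c e : Config) (he : globalF r lam e = c) (i : ℤ) :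
    -((r : ℤ) + 1) ≤ offF r c e i ∧ offF r c e i ≤ (r : ℤ) + 1 ∧
      decode (c i) ((r : ℤ) + 1) (offF r c e i) = e i := by
  have hei : globalF r lam e i = c i := congrFun he i
  by_cases hb : e i = ⊥
  · have hc : c i = ⊥ := by rw [← hei]; simp [globalF, hb]
    have hoff : offF r c e i = -((r : ℤ) + 1) := by simp [offF, hb]
    refine ⟨by omega, by rw [hoff]; omega, ?_⟩
    rw [hoff, hb]
    simp [decode]
  · by_cases ht : e i = ⊤
    · have hc : c i = ⊤ := by rw [← hei]; simp [globalF, ht]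
      have hoff : offF r c e i = (r : ℤ) + 1 := by simp [offF, hb, ht]
      refine ⟨by rw [hoff]; omega, by rw [hoff], ?_⟩
      rw [hoff, ht]
      unfold decode
      rw [if_neg (by omega), if_pos rfl]
    · have hei' : finVal (valZ (e i) + lam (nbhd r e i)) = c i := by
        rw [← hei]; simp [globalF, hb, ht]
      have hrL := hlam (nbhd r e i)
      have hvc : valZ (c i) = valZ (e i) + lam (nbhd r e i) := by
        rw [← hei', valZ_finVal]
      have hoff : offF r c e i = valZ (e i) - valZ (c i) := by simp [offF, hb, ht]
      refine ⟨by rw [hoff]; omega, by rw [hoff]; omega, ?_⟩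
      rw [hoff]
      unfold decode
      rw [if_neg (by omega), if_neg (by omega),
        show valZ (c i) + (valZ (e i) - valZ (c i)) = valZ (e i) by ring]
      exact finVal_valZ hb ht

/-- Locality: `globalF` at `i` only depends on the values in `[i-r, i+r]`. -/
lemma globalF_local (r : ℕ) (lam : (Fin (2 * r) → EZ) → ℤ) (e₁ e₂ : Config) (i : ℤ)
    (h : ∀ o : ℤ, -(r : ℤ) ≤ o → o ≤ (r : ℤ) → e₁ (i + o) = e₂ (i + o)) :
    globalF r lam e₁ i = globalF r lam e₂ i := by
  have h0 : e₁ i = e₂ i := by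
    have := h 0 (by omega) (by omega); simpa using this
  have hn : nbhd r e₁ i = nbhd r e₂ i := by
    funext j
    unfold nbhd
    rw [h0]
    congr 1
    split
    · exact h _ (by omega) (by have := j.isLt; omega)
    · exact h _ (by omega) (by have := j.isLt; omega)
  unfold globalF
  rw [h0, hn]

/-- Shift invariance of `globalF` for a periodic configuration. -/
lemma globalF_shift (r : ℕ) (lam : (Fin (2 * r) → EZ) → ℤ) (e : Config) (q : ℤ)
    (hper : ∀ j, e (j + q) = e j) (i : ℤ) :
    globalF r lam e (i + q) = globalF r lam e i := by
  have hX : ∀ X : ℤ, e (i + q + X) = e (i + X) := by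
    intro X; rw [add_right_comm]; exact hper (i + X)
  have hn : nbhd r e (i + q) = nbhd r e i := by
    funext j
    unfold nbhd
    rw [hper i]
    congr 1
    exact hX _
  unfold globalF
  rw [hper i, hn]

lemma periodic_int_mul {β : Type*} {f : ℤ → β} {q : ℤ} (h : ∀ i, f (i + q) = f i) :
    ∀ (m : ℤ) (i : ℤ), f (i + m * q) = f i := by
  intro m
  induction m using Int.induction_on with
  | zero => simp
  | succ n ih =>
    intro i
    rw [show i + ((n : ℤ) + 1) * q = (i + q) + (n : ℤ) * q by ring, ih, h]
  | pred n ih =>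
    intro i
    have h2 := h (i - q)
    rw [show i - q + q = i by ring] at h2
    rw [show i + (-(n : ℤ) - 1) * q = (i - q) + (-(n : ℤ)) * q by ring, ih, h2]

/-- For every one-dimensional sand automaton (radius `r ≥ 1`, local rule `lam` taking
values in `[-r, r]`), surjectivity implies `P`-surjectivity: if the global function is
surjective then every periodic configuration has a periodic preimage. -/
theorem surjective_implies_P_surjective
    (r : ℕ) (hr : 1 ≤ r) (lam : (Fin (2 * r) → EZ) → ℤ)
    (hlam : ∀ v, -(r : ℤ) ≤ lam v ∧ lam v ≤ (r : ℤ))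
    (hsurj : Function.Surjective (globalF r lam)) :
    ∀ c : Config, PeriodicConf c → ∃ c', PeriodicConf c' ∧ globalF r lam c' = c := by
  intro c hcper
  obtain ⟨p0, hp00, hp0per⟩ := hcper
  obtain ⟨p, hppos, hp⟩ : ∃ p : ℤ, 0 < p ∧ ∀ i, c (i + p) = c i := by
    rcases hp00.lt_or_gt with h | h
    · refine ⟨-p0, by omega, fun i => ?_⟩
      have := hp0per (i + -p0)
      rw [show i + -p0 + p0 = i by ring] at this
      exact this.symm
    · exact ⟨p0, h, hp0per⟩
  obtain ⟨e, he⟩ := hsurj c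
  have key := key_lemma r lam hlam c e he
  -- pigeonhole
  have hfin : ∀ i, offF r c e i ∈ Finset.Icc (-((r : ℤ) + 1)) ((r : ℤ) + 1) := fun i =>
    Finset.mem_Icc.2 ⟨(key i).1, (key i).2.1⟩
  obtain ⟨k1, k2, hk12, hH12⟩ : ∃ k1 k2 : ℕ, k1 < k2 ∧ ∀ j : Fin (2 * r),
      offF r c e ((k1 : ℤ) * p - (r : ℤ) + ((j : ℕ) : ℤ)) =
      offF r c e ((k2 : ℤ) * p - (r : ℤ) + ((j : ℕ) : ℤ)) := by
    set H : ℕ → (Fin (2 * r) → (Finset.Icc (-((r : ℤ) + 1)) ((r : ℤ) + 1))) :=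
      fun k j => ⟨offF r c e ((k : ℤ) * p - (r : ℤ) + ((j : ℕ) : ℤ)), hfin _⟩ with hHdef
    obtain ⟨k, k', hne, hH⟩ := Finite.exists_ne_map_eq_of_infinite H
    have hval : ∀ j : Fin (2 * r),
        offF r c e ((k : ℤ) * p - (r : ℤ) + ((j : ℕ) : ℤ)) =
        offF r c e ((k' : ℤ) * p - (r : ℤ) + ((j : ℕ) : ℤ)) := by
      intro j
      have := congrFun hH j
      rw [hHdef] at this
      exact congrArg Subtype.val this
    rcases hne.lt_or_gt with h | h
    · exact ⟨k, k', h, hval⟩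
    · exact ⟨k', k, h, fun j => (hval j).symm⟩
  set q : ℤ := ((k2 - k1 : ℕ) : ℤ) * p with hqdef
  have hq : 0 < q := by
    apply mul_pos _ hppos
    exact_mod_cast Nat.sub_pos_of_lt hk12
  set a : ℤ := (k1 : ℤ) * p - (r : ℤ) with hadef
  have hk2p : (k2 : ℤ) * p = (k1 : ℤ) * p + q := by
    rw [hqdef]
    have : ((k2 - k1 : ℕ) : ℤ) = (k2 : ℤ) - (k1 : ℤ) := by omega
    rw [this]; ring
  -- window match
  have window : ∀ t : ℤ, 0 ≤ t → t < 2 * (r : ℤ) → e (a + t + q) = e (a + t) := by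
    intro t ht1 ht2
    have jlt : t.toNat < 2 * r := by omega
    have h1 := hH12 ⟨t.toNat, jlt⟩
    simp only [Fin.val_mk] at h1
    rw [show ((t.toNat : ℕ) : ℤ) = t by omega] at h1
    have hc : c ((k1 : ℤ) * p - (r : ℤ) + t) = c ((k2 : ℤ) * p - (r : ℤ) + t) := by
      have ha1 := periodic_int_mul hp (k1 : ℤ) (-(r : ℤ) + t)
      have ha2 := periodic_int_mul hp (k2 : ℤ) (-(r : ℤ) + t)
      rw [show (k1 : ℤ) * p - (r : ℤ) + t = -(r : ℤ) + t + (k1 : ℤ) * p by ring,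
        show (k2 : ℤ) * p - (r : ℤ) + t = -(r : ℤ) + t + (k2 : ℤ) * p by ring, ha1, ha2]
    have e1 := (key ((k1 : ℤ) * p - (r : ℤ) + t)).2.2
    have e2 := (key ((k2 : ℤ) * p - (r : ℤ) + t)).2.2
    calc e (a + t + q) = e ((k2 : ℤ) * p - (r : ℤ) + t) := by
          rw [hadef, hk2p]; ring_nf
      _ = decode (c ((k2 : ℤ) * p - (r : ℤ) + t)) ((r : ℤ) + 1)
            (offF r c e ((k2 : ℤ) * p - (r : ℤ) + t)) := e2.symm
      _ = decode (c ((k1 : ℤ) * p - (r : ℤ) + t)) ((r : ℤ) + 1)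
            (offF r c e ((k1 : ℤ) * p - (r : ℤ) + t)) := by rw [← hc, ← h1]
      _ = e ((k1 : ℤ) * p - (r : ℤ) + t) := e1
      _ = e (a + t) := by rw [hadef]
  -- the periodic preimage
  set E : Config := fun i => e (a + (i - a) % q) with hEdef
  have hEper : ∀ i, E (i + q) = E i := by
    intro i
    show e (a + (i + q - a) % q) = e (a + (i - a) % q)
    rw [show i + q - a = (i - a) + q * 1 by ring, Int.add_mul_emod_self_left]
  have EEqAux : ∀ n : ℕ, ∀ j, a ≤ j → j < a + q + 2 * (r : ℤ) → (j - a).toNat < n →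
      E j = e j := by
    intro n
    induction n with
    | zero => intro j h1 h2 h3; omega
    | succ n ih =>
      intro j h1 h2 h3
      by_cases hlt : j < a + q
      · show e (a + (j - a) % q) = e j
        rw [Int.emod_eq_of_lt (by omega) (by omega),
          show a + (j - a) = j by ring]
      · have s1 : E j = E (j - q) := by
          have := hEper (j - q)
          rw [show j - q + q = j by ring] at this
          exact this
        have s2 : E (j - q) = e (j - q) := ih (j - q) (by omega) (by omega) (by omega)
        have s3 : e (j - q) = e j := by
          have hw := window (j - q - a) (by omega) (by omega)
          rw [show a + (j - q - a) + q = j by ring,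
            show a + (j - q - a) = j - q by ring] at hw
          exact hw.symm
        rw [s1, s2, s3]
  have EEq : ∀ j, a ≤ j → j < a + q + 2 * (r : ℤ) → E j = e j := fun j h1 h2 =>
    EEqAux ((j - a).toNat + 1) j h1 h2 (by omega)
  have hGper : ∀ i, globalF r lam E (i + q) = globalF r lam E i :=
    globalF_shift r lam E q hEper
  have hcq : ∀ i, c (i + q) = c i := by
    intro i
    have := periodic_int_mul hp ((k2 - k1 : ℕ) : ℤ) i
    rwa [← hqdef] at this
  have main : ∀ i, a + (r : ℤ) ≤ i → i < a + (r : ℤ) + q → globalF r lam E i = c i := by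
    intro i h1 h2
    have hloc : ∀ o : ℤ, -(r : ℤ) ≤ o → o ≤ (r : ℤ) → E (i + o) = e (i + o) :=
      fun o ho1 ho2 => EEq _ (by omega) (by omega)
    rw [globalF_local r lam E e i hloc]
    exact congrFun he i
  have hall : ∀ i, globalF r lam E i = c i := by
    intro i
    set t : ℤ := (i - (a + (r : ℤ))) % q with htdef
    have ht1 : 0 ≤ t := Int.emod_nonneg _ (by omega)
    have ht2 : t < q := Int.emod_lt_of_pos _ hq
    have hdiv := Int.mul_ediv_add_emod (i - (a + (r : ℤ))) q
    set m : ℤ := (i - (a + (r : ℤ))) / q with hmdef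
    have hi : i = (a + (r : ℤ) + t) + m * q := by
      rw [mul_comm]; linarith [hdiv]
    have g1 := periodic_int_mul hGper m (a + (r : ℤ) + t)
    rw [← hi] at g1
    have g2 := periodic_int_mul hcq m (a + (r : ℤ) + t)
    rw [← hi] at g2
    rw [g1, main (a + (r : ℤ) + t) (by omega) (by omega), ← g2]
  exact ⟨E, ⟨q, by omega, hEper⟩, funext hall⟩
end

section
/- For every d-dimensional sand automaton, P-injectivity implies F-injectivity: if the global function f is injective on periodic configurations, then f is injective on finite configurations. -/
/-- `d`-dimensional sandpile configurations. -/
def ConfigD (d : ℕ) : Type := (Fin d → ℤ) → EZ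

/-- The index set of a `d`-dimensional neighborhood of radius `r`: the nonzero
vectors `v ∈ [-r, r]^d`. -/
def NIdx (d r : ℕ) : Type := {v : Fin d → ℤ // (∀ j, |v j| ≤ (r : ℤ)) ∧ v ≠ 0}

/-- The neighborhood tuple `d_r^i(c) = (β_r^{c_i}(c_{i+v}))_{v ∈ [-r,r]^d, v ≠ 0}`
(with reference height `0` when `c_i = ±∞`). -/
noncomputable def nbhdD (d r : ℕ) (c : ConfigD d) (i : Fin d → ℤ) : NIdx d r → EZ :=
  fun v => beta r (refH (c i)) (c (fun t => i t + v.1 t))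

/-- The global function of the `d`-dimensional sand automaton of radius `r`
with local rule `lam`. -/
noncomputable def globalD (d r : ℕ) (lam : (NIdx d r → EZ) → ℤ) (c : ConfigD d) : ConfigD d :=
  fun i => if c i = ⊥ ∨ c i = ⊤ then c i
    else finVal (valZ (c i) + lam (nbhdD d r c i))

/-- Finite `d`-dimensional configurations: `c_i = 0` whenever the infinity norm
`|i| = max_j |i_j|` is at least some `k`. -/
def FiniteD {d : ℕ} (c : ConfigD d) : Prop :=
  ∃ k : ℕ, ∀ i : Fin d → ℤ, (∃ j, (k : ℤ) ≤ |i j|) → c i = finVal 0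

/-- Periodic `d`-dimensional configurations: invariant under translation by `p · e_j`
for some integer `p ≥ 1` and every standard basis vector `e_j`. -/
def PeriodicD {d : ℕ} (c : ConfigD d) : Prop :=
  ∃ p : ℤ, 1 ≤ p ∧ ∀ (i : Fin d → ℤ) (j : Fin d),
    c (fun t => i t + if t = j then p else 0) = c i

namespace PFI

/-- reduction of `x` modulo `2*(k+r)` into the window `[-(k+r), k+r-1]` -/
def red (k r : ℕ) (x : ℤ) : ℤ := (x + ((k : ℤ) + r)) % (2*((k:ℤ)+r)) - ((k:ℤ) + r)

lemma red_range (k r : ℕ) (hr : 1 ≤ r) (x : ℤ) :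
    -((k:ℤ)+r) ≤ red k r x ∧ red k r x ≤ (k:ℤ)+r-1 := by
  have hr' : (1:ℤ) ≤ r := by exact_mod_cast hr
  have hp : (0:ℤ) < 2*((k:ℤ)+r) := by positivity
  have h1 := Int.emod_nonneg (x + ((k:ℤ)+r)) hp.ne'
  have h2 := Int.emod_lt_of_pos (x + ((k:ℤ)+r)) hp
  unfold red; omega

lemma red_eq_self (k r : ℕ) (y : ℤ) (h1 : -((k:ℤ)+r) ≤ y) (h2 : y ≤ (k:ℤ)+r-1) :
    red k r y = y := by
  unfold red
  rw [Int.emod_eq_of_lt (by omega) (by omega)]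
  omega

lemma red_add_mul (k r : ℕ) (y m : ℤ) :
    red k r (y + 2*((k:ℤ)+r)*m) = red k r y := by
  unfold red
  rw [show y + 2*((k:ℤ)+r)*m + ((k:ℤ)+r) = y + ((k:ℤ)+r) + 2*((k:ℤ)+r)*m by ring,
    Int.add_mul_emod_self_left]

lemma red_spec (k r : ℕ) (x : ℤ) :
    ∃ q, x = red k r x + 2*((k:ℤ)+r) * q := by
  refine ⟨(x + ((k:ℤ)+r)) / (2*((k:ℤ)+r)), ?_⟩
  have := Int.emod_add_mul_ediv (x + ((k:ℤ)+r)) (2*((k:ℤ)+r))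
  unfold red; linarith

lemma red_add (k r : ℕ) (x v : ℤ) :
    red k r (x + v) = red k r (red k r x + v) := by
  obtain ⟨q, hq⟩ := red_spec k r x
  conv_lhs => rw [hq]
  rw [show red k r x + 2*((k:ℤ)+r)*q + v = (red k r x + v) + 2*((k:ℤ)+r)*q by ring,
    red_add_mul]

lemma red_dichotomy (k r : ℕ) (hr : 1 ≤ r) (x v : ℤ) (hv : |v| ≤ (r:ℤ)) :
    red k r (x + v) = red k r x + v ∨
    ((k:ℤ) ≤ |red k r (x + v)| ∧ (k:ℤ) ≤ |red k r x + v|) := by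
  have hr' : (1:ℤ) ≤ r := by exact_mod_cast hr
  obtain ⟨ha1, ha2⟩ := red_range k r hr x
  rcases abs_le.mp hv with ⟨hv1, hv2⟩
  rw [red_add k r x v]
  set a := red k r x with ha_def
  by_cases h : -((k:ℤ)+r) ≤ a + v ∧ a + v ≤ (k:ℤ)+r-1
  · left; exact red_eq_self k r _ h.1 h.2
  · right
    rcases (by omega : (k:ℤ)+r ≤ a + v ∨ a + v ≤ -((k:ℤ)+r)-1) with hc | hc
    · have h1 : red k r (a + v) = red k r (a + v - 2*((k:ℤ)+r)) := by
        conv_lhs => rw [show a + v = (a + v - 2*((k:ℤ)+r)) + 2*((k:ℤ)+r)*1 by ring]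
        exact red_add_mul k r (a + v - 2*((k:ℤ)+r)) 1
      have he : red k r (a + v) = a + v - 2*((k:ℤ)+r) :=
        h1.trans (red_eq_self k r (a + v - 2*((k:ℤ)+r)) (by omega) (by omega))
      rw [he]
      constructor
      · apply le_abs.mpr; right; omega
      · apply le_abs.mpr; left; omega
    · have h1 : red k r (a + v) = red k r (a + v + 2*((k:ℤ)+r)) := by
        conv_lhs => rw [show a + v = (a + v + 2*((k:ℤ)+r)) + 2*((k:ℤ)+r)*(-1) by ring]
        exact red_add_mul k r (a + v + 2*((k:ℤ)+r)) (-1)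
      have he : red k r (a + v) = a + v + 2*((k:ℤ)+r) :=
        h1.trans (red_eq_self k r (a + v + 2*((k:ℤ)+r)) (by omega) (by omega))
      rw [he]
      constructor
      · apply le_abs.mpr; left; omega
      · apply le_abs.mpr; right; omega

/-- Periodization of a configuration. -/
def PerC (d k r : ℕ) (c : ConfigD d) : ConfigD d :=
  fun i => c (fun t => red k r (i t))

lemma shift_eq (d k r : ℕ) (hr : 1 ≤ r) (c : ConfigD d)
    (hk : ∀ i : Fin d → ℤ, (∃ j, (k : ℤ) ≤ |i j|) → c i = finVal 0)
    (i v : Fin d → ℤ) (hv : ∀ t, |v t| ≤ (r:ℤ)) :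
    c (fun t => red k r (i t + v t)) = c (fun t => red k r (i t) + v t) := by
  by_cases h : ∀ t, red k r (i t + v t) = red k r (i t) + v t
  · exact congrArg c (funext h)
  · push_neg at h
    obtain ⟨t, ht⟩ := h
    have hd2 := (red_dichotomy k r hr (i t) (v t) (hv t)).resolve_left ht
    rw [hk _ ⟨t, hd2.1⟩, hk _ ⟨t, hd2.2⟩]

lemma perC_periodic (d k r : ℕ) (c : ConfigD d) (hkr : 1 ≤ (k:ℤ) + r) :
    PeriodicD (PerC d k r c) := by
  refine ⟨2*((k:ℤ)+r), by omega, ?_⟩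
  intro i j
  show c _ = c _
  congr 1
  funext t
  by_cases h : t = j
  · simp only [if_pos h]
    have h1 := red_add_mul k r (i t) 1
    rw [show i t + 2*((k:ℤ)+r)*1 = i t + 2*((k:ℤ)+r) by ring] at h1
    exact h1
  · simp [h]

lemma global_perC (d k r : ℕ) (hr : 1 ≤ r) (lam : (NIdx d r → EZ) → ℤ) (c : ConfigD d)
    (hk : ∀ i : Fin d → ℤ, (∃ j, (k : ℤ) ≤ |i j|) → c i = finVal 0)
    (i : Fin d → ℤ) :
    globalD d r lam (PerC d k r c) i = globalD d r lam c (fun t => red k r (i t)) := by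
  have hbase : PerC d k r c i = c (fun t => red k r (i t)) := rfl
  have hnb : nbhdD d r (PerC d k r c) i = nbhdD d r c (fun t => red k r (i t)) := by
    funext v
    show beta r (refH (PerC d k r c i)) (PerC d k r c (fun t => i t + v.1 t))
      = beta r (refH (c (fun t => red k r (i t)))) (c (fun t => red k r (i t) + v.1 t))
    rw [hbase]
    congr 1
    exact shift_eq d k r hr c hk i v.1 v.2.1
  show (if PerC d k r c i = ⊥ ∨ PerC d k r c i = ⊤ then PerC d k r c i
      else finVal (valZ (PerC d k r c i) + lam (nbhdD d r (PerC d k r c) i))) = _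
  rw [hbase, hnb]
  rfl

end PFI

open PFI

/-- For every `d`-dimensional sand automaton (dimension `d ≥ 1`, radius `r ≥ 1`, local
rule `lam` taking values in `[-r, r]`), `P`-injectivity implies `F`-injectivity: if the
global function is injective on periodic configurations, then it is injective on
finite configurations. -/
theorem P_injective_implies_F_injective
    (d r : ℕ) (hd : 1 ≤ d) (hr : 1 ≤ r)
    (lam : (NIdx d r → EZ) → ℤ)
    (hlam : ∀ v, -(r : ℤ) ≤ lam v ∧ lam v ≤ (r : ℤ))
    (hPinj : Set.InjOn (globalD d r lam) {c : ConfigD d | PeriodicD c}) :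
    Set.InjOn (globalD d r lam) {c : ConfigD d | FiniteD c} := by
  intro c₁ hc₁ c₂ hc₂ hf
  obtain ⟨k₁, hk₁⟩ := hc₁
  obtain ⟨k₂, hk₂⟩ := hc₂
  set k := max (max k₁ k₂) 1 with hk_def
  have hk1 : 1 ≤ k := le_max_right _ _
  have hr' : (1:ℤ) ≤ r := by exact_mod_cast hr
  have hkr : 1 ≤ (k:ℤ) + r := by
    have : (1:ℤ) ≤ k := by exact_mod_cast hk1
    omega
  have hc₁' : ∀ i : Fin d → ℤ, (∃ j, (k : ℤ) ≤ |i j|) → c₁ i = finVal 0 := by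
    intro i ⟨j, hj⟩
    refine hk₁ i ⟨j, le_trans ?_ hj⟩
    exact_mod_cast Nat.le_trans (le_max_left k₁ k₂) (le_max_left _ _)
  have hc₂' : ∀ i : Fin d → ℤ, (∃ j, (k : ℤ) ≤ |i j|) → c₂ i = finVal 0 := by
    intro i ⟨j, hj⟩
    refine hk₂ i ⟨j, le_trans ?_ hj⟩
    exact_mod_cast Nat.le_trans (le_max_right k₁ k₂) (le_max_left _ _)
  have hfper : globalD d r lam (PerC d k r c₁) = globalD d r lam (PerC d k r c₂) := by
    funext i
    rw [global_perC d k r hr lam c₁ hc₁' i, global_perC d k r hr lam c₂ hc₂' i, hf]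
  have hper := hPinj (perC_periodic d k r c₁ hkr) (perC_periodic d k r c₂ hkr) hfper
  funext i
  by_cases h : ∃ j, (k : ℤ) ≤ |i j|
  · rw [hc₁' i h, hc₂' i h]
  · push_neg at h
    have hred : (fun t => red k r (i t)) = i := by
      funext t
      have := h t
      exact red_eq_self k r (i t) (by cases abs_lt.mp this; omega) (by cases abs_lt.mp this; omega)
    have h1 : c₁ i = PerC d k r c₁ i := by show c₁ i = c₁ _; rw [hred]
    have h2 : c₂ i = PerC d k r c₂ i := by show c₂ i = c₂ _; rw [hred]
    rw [h1, h2, hper]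
end
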